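/- arXiv:1211.4733 — 2 statements merged into one kernel-verified Lean document; each statement's English description precedes it below -/
import Mathlib

section
/- Let n be an odd perfect number with exactly m ≥ 3 distinct prime factors, and suppose the third smallest prime factor of n is the r-th prime p_r (where p_1 = 2, p_2 = 3, p_3 = 5, ...). Then (1 + 1/3) · (1 + 1/5) · ∏_{j=r}^{r+m-3} (1 + 1/p_j) > 16/π². -/
open Finset Real

private lemma hasSum_odd_inv_sq :
    HasSum (fun b : ℕ => if Odd b then (1 : ℝ) / (b : ℝ) ^ 2 else 0) (π ^ 2 / 8) := by
  have hg : HasSum (fun k : ℕ => (1 : ℝ) / (k : ℝ) ^ 2) (π ^ 2 / 6) := hasSum_zeta_two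
  have hinj : Function.Injective (fun k : ℕ => 2 * k) := fun a b h => by simpa using h
  have heven : HasSum (fun b : ℕ => if Even b then (1 : ℝ) / (b : ℝ) ^ 2 else 0)
      (π ^ 2 / 24) := by
    have h0 : ∀ x ∉ Set.range (fun k : ℕ => 2 * k),
        (if Even x then (1 : ℝ) / (x : ℝ) ^ 2 else 0) = 0 := by
      intro x hx
      have : ¬ Even x := by
        rintro ⟨c, rfl⟩
        exact hx ⟨c, show 2 * c = c + c by omega⟩
      simp [this]
    rw [← hinj.hasSum_iff h0]
    have h4 := hg.div_const 4
    rw [show (π ^ 2 / 6 / 4 : ℝ) = π ^ 2 / 24 by ring] at h4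
    convert h4 using 1
    · rfl
    funext k
    have he : Even (2 * k) := ⟨k, two_mul k⟩
    simp only [Function.comp_apply, he, if_true]
    push_cast
    rcases eq_or_ne (k : ℝ) 0 with h | h
    · simp [h]
    · field_simp
      ring
  have hkey : (fun b : ℕ => if Odd b then (1 : ℝ) / (b : ℝ) ^ 2 else 0)
      = fun b : ℕ => (1 : ℝ) / (b : ℝ) ^ 2 - (if Even b then (1 : ℝ) / (b : ℝ) ^ 2 else 0) := by
    funext b
    rcases Nat.even_or_odd b with h | h
    · simp [h, Nat.not_odd_iff_even.mpr h]
    · simp [h, Nat.not_even_iff_odd.mpr h]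
  rw [hkey]
  have := hg.sub heven
  convert this using 1
  · rfl
  ring

private def sqPart (d : ℕ) : ℕ := ∏ p ∈ d.primeFactors, p ^ (d.factorization p / 2)

private def oddSupp (d : ℕ) : Finset ℕ := d.primeFactors.filter fun p => Odd (d.factorization p)

private lemma decomp (d : ℕ) (hd : d ≠ 0) : (∏ p ∈ oddSupp d, p) * (sqPart d) ^ 2 = d := by
  have h1 : d = ∏ p ∈ d.primeFactors, p ^ d.factorization p := by
    conv_lhs => rw [← Nat.factorization_prod_pow_eq_self hd]
    rw [Finsupp.prod, Nat.support_factorization]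
  rw [oddSupp, sqPart, Finset.prod_filter, ← Finset.prod_pow, ← Finset.prod_mul_distrib]
  conv_rhs => rw [h1]
  apply Finset.prod_congr rfl
  intro p hp
  set e := d.factorization p with he
  have hpow : (p ^ (e / 2)) ^ 2 = p ^ (e / 2 * 2) := by rw [← pow_mul]
  by_cases ho : Odd e
  · have h2 : 1 + e / 2 * 2 = e := by
      rcases ho with ⟨c, hc⟩; omega
    rw [if_pos ho, hpow, ← pow_succ']
    congr 1
    omega
  · have h2 : e / 2 * 2 = e := by
      rcases Nat.even_or_odd e with h | h
      · rcases h with ⟨c, hc⟩; omega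
      · exact absurd h ho
    rw [if_neg ho, hpow, one_mul, h2]

private lemma nth_prime_succ_le {k q : ℕ} (hq : q.Prime) (h : Nat.nth Nat.Prime k < q) :
    Nat.nth Nat.Prime (k + 1) ≤ q := by
  have hinf : (setOf Nat.Prime).Infinite := Nat.infinite_setOf_prime
  have h1 : Nat.nth Nat.Prime (Nat.count Nat.Prime q) = q := Nat.nth_count hq
  have hk : k < Nat.count Nat.Prime q := by
    by_contra hc
    push_neg at hc
    have := (Nat.nth_le_nth hinf).mpr hc
    omega
  calc Nat.nth Nat.Prime (k + 1) ≤ Nat.nth Nat.Prime (Nat.count Nat.Prime q) :=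
        (Nat.nth_le_nth hinf).mpr hk
    _ = q := h1

/-- Let `n` be an odd perfect number with exactly `m ≥ 3` distinct prime factors whose
third smallest prime factor is the `r`-th prime (1-indexed, so the 1st prime is 2). Then
`(1 + 1/3) · (1 + 1/5) · ∏_{j=r}^{r+m-3} (1 + 1/p_j) > 16/π²`. -/
theorem opn_third_prime_product_gt (n m r : ℕ) (hn : Nat.Perfect n) (hodd : Odd n)
    (hm : n.primeFactors.card = m) (hm3 : 3 ≤ m) (hr : 1 ≤ r)
    (hthird : (Finset.sort n.primeFactors (· ≤ ·))[2]! = Nat.nth Nat.Prime (r - 1)) :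
    (1 + 1 / 3 : ℝ) * (1 + 1 / 5) *
        ∏ j ∈ Finset.Icc r (r + m - 3), (1 + 1 / (Nat.nth Nat.Prime (j - 1) : ℝ)) >
      16 / Real.pi ^ 2 := by
  classical
  have hn0 : 0 < n := hn.2
  have hne : n ≠ 0 := hn0.ne'
  have h2n : ¬ (2 ∣ n) := by
    rintro ⟨c, rfl⟩
    rcases hodd with ⟨k, hk⟩
    omega
  have hσ : ∑ d ∈ n.divisors, d = 2 * n := (Nat.perfect_iff_sum_divisors_eq_two_mul hn0).mp hn
  -- the function summing to π²/8
  set f : ℕ → ℝ := fun b => if Odd b then (1 : ℝ) / (b : ℝ) ^ 2 else 0 with hf_def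
  have hf : HasSum f (π ^ 2 / 8) := hasSum_odd_inv_sq
  have hf0 : ∀ b, 0 ≤ f b := by
    intro b
    simp only [hf_def]
    split <;> positivity
  -- T < π²/8
  set T : ℝ := ∑ b ∈ Finset.range (n + 1), f b with hT_def
  have hT0 : 0 ≤ T := Finset.sum_nonneg fun b _ => hf0 b
  have hTlt : T < π ^ 2 / 8 := by
    have hmem : 2 * n + 1 ∉ Finset.range (n + 1) := by simp; omega
    have hle := sum_le_hasSum (insert (2 * n + 1) (Finset.range (n + 1)))
      (fun i _ => hf0 i) hf
    rw [Finset.sum_insert hmem] at hle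
    have hpos : 0 < f (2 * n + 1) := by
      have hodd' : Odd (2 * n + 1) := ⟨n, by omega⟩
      simp only [hf_def, hodd', if_true]
      positivity
    linarith
  -- P := ∏ (1 + 1/p)
  set P : ℝ := ∏ p ∈ n.primeFactors, (1 + 1 / (p : ℝ)) with hP_def
  have hPpos : 0 < P := Finset.prod_pos fun p hp => by positivity
  -- P as sum over powerset
  have hP_sum : P = ∑ t ∈ n.primeFactors.powerset, ∏ p ∈ t, (1 : ℝ) / (p : ℝ) := by
    rw [hP_def]
    have : ∀ p ∈ n.primeFactors, (1 + 1 / (p : ℝ)) = (1 / (p : ℝ) + 1) := fun p _ => by ring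
    rw [Finset.prod_congr rfl this, Finset.prod_add]
    apply Finset.sum_congr rfl
    intro t ht
    simp
  -- ∑_{d|n} 1/d = 2
  have hsum2 : ∑ d ∈ n.divisors, (1 : ℝ) / (d : ℝ) = 2 := by
    have h1 : ∑ d ∈ n.divisors, (1 : ℝ) / (d : ℝ)
        = ∑ d ∈ n.divisors, ((n / d : ℕ) : ℝ) / (n : ℝ) := by
      apply Finset.sum_congr rfl
      intro d hd
      rcases Nat.mem_divisors.mp hd with ⟨hdvd, -⟩
      have hd0 : 0 < d := Nat.pos_of_mem_divisors hd
      have hnd : ((n / d : ℕ) : ℝ) = (n : ℝ) / (d : ℝ) :=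
        Nat.cast_div hdvd (by positivity)
      rw [hnd]
      field_simp
    rw [h1, ← Finset.sum_div]
    rw [← Nat.cast_sum]
    rw [Nat.sum_div_divisors n (fun x => x)]
    have : (n.divisors.sum fun x => x) = 2 * n := hσ
    rw [this]
    push_cast
    field_simp
  -- the injection d ↦ (oddSupp d, sqPart d)
  set φ : ℕ → Finset ℕ × ℕ := fun d => (oddSupp d, sqPart d) with hφ_def
  set g : Finset ℕ × ℕ → ℝ := fun x => (∏ p ∈ x.1, (1 : ℝ) / (p : ℝ)) * f x.2 with hg_def
  have hg0 : ∀ x, 0 ≤ g x := by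
    intro x
    apply mul_nonneg _ (hf0 _)
    exact Finset.prod_nonneg fun p _ => by positivity
  -- facts about divisors
  have hdiv_facts : ∀ d ∈ n.divisors, d ≠ 0 ∧ sqPart d ≠ 0 ∧ Odd (sqPart d) ∧ sqPart d ≤ n ∧
      oddSupp d ⊆ n.primeFactors := by
    intro d hd
    rcases Nat.mem_divisors.mp hd with ⟨hdvd, -⟩
    have hd0 : d ≠ 0 := (Nat.pos_of_mem_divisors hd).ne'
    have hdec := decomp d hd0
    have hb0 : sqPart d ≠ 0 := by
      intro h
      rw [h] at hdec
      simp at hdec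
      exact hd0 hdec.symm
    have hbsq : (sqPart d) ^ 2 ∣ d := Dvd.intro_left _ hdec
    have hbdvd : sqPart d ∣ n := dvd_trans (dvd_trans (dvd_pow_self _ two_ne_zero) hbsq) hdvd
    have hbodd : Odd (sqPart d) := by
      rcases Nat.even_or_odd (sqPart d) with h | h
      · exfalso
        exact h2n (dvd_trans h.two_dvd hbdvd)
      · exact h
    have hble : sqPart d ≤ n := Nat.le_of_dvd hn0 hbdvd
    refine ⟨hd0, hb0, hbodd, hble, ?_⟩
    exact (Finset.filter_subset _ _).trans (Nat.primeFactors_mono hdvd hne)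
  -- pointwise identity
  have hpw : ∀ d ∈ n.divisors, (1 : ℝ) / (d : ℝ) = g (φ d) := by
    intro d hd
    obtain ⟨hd0, hb0, hbodd, -, -⟩ := hdiv_facts d hd
    have hdec := decomp d hd0
    have hcast : (d : ℝ) = ((∏ p ∈ oddSupp d, p : ℕ) : ℝ) * ((sqPart d : ℕ) : ℝ) ^ 2 := by
      conv_lhs => rw [← hdec]
      push_cast; ring
    have hA0 : ((∏ p ∈ oddSupp d, p : ℕ) : ℝ) ≠ 0 := by
      have : (∏ p ∈ oddSupp d, p) ≠ 0 := by
        intro h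
        rw [h] at hdec
        simp at hdec
        exact hd0 hdec.symm
      exact_mod_cast this
    have hB0 : ((sqPart d : ℕ) : ℝ) ≠ 0 := Nat.cast_ne_zero.mpr hb0
    have hprodcast : ((∏ p ∈ oddSupp d, p : ℕ) : ℝ) = ∏ p ∈ oddSupp d, (p : ℝ) := by
      push_cast; rfl
    simp only [hg_def, hφ_def, hf_def, hbodd, if_true]
    simp only [one_div]
    rw [Finset.prod_inv_distrib, ← mul_inv]
    congr 1
    rw [hcast, hprodcast]
  -- injectivity
  have hinj : ∀ d1 ∈ n.divisors, ∀ d2 ∈ n.divisors, φ d1 = φ d2 → d1 = d2 := by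
    intro d1 h1 d2 h2 heq
    obtain ⟨hd10, -, -, -, -⟩ := hdiv_facts d1 h1
    obtain ⟨hd20, -, -, -, -⟩ := hdiv_facts d2 h2
    have e1 := decomp d1 hd10
    have e2 := decomp d2 hd20
    simp only [hφ_def, Prod.mk.injEq] at heq
    rw [← e1, ← e2, heq.1, heq.2]
  -- the inequality 2 ≤ P * T
  have hmain : (2 : ℝ) ≤ P * T := by
    have step1 : ∑ d ∈ n.divisors, (1 : ℝ) / (d : ℝ) = ∑ x ∈ n.divisors.image φ, g x := by
      rw [Finset.sum_image hinj]
      exact Finset.sum_congr rfl hpw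
    have hsub : n.divisors.image φ ⊆ n.primeFactors.powerset ×ˢ Finset.range (n + 1) := by
      intro x hx
      rcases Finset.mem_image.mp hx with ⟨d, hd, rfl⟩
      obtain ⟨-, -, -, hble, hsupp⟩ := hdiv_facts d hd
      rw [Finset.mem_product]
      constructor
      · exact Finset.mem_powerset.mpr hsupp
      · simp only [hφ_def, Finset.mem_range]
        omega
    have step2 : ∑ x ∈ n.divisors.image φ, g x
        ≤ ∑ x ∈ n.primeFactors.powerset ×ˢ Finset.range (n + 1), g x :=
      Finset.sum_le_sum_of_subset_of_nonneg hsub fun x _ _ => hg0 x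
    have step3 : ∑ x ∈ n.primeFactors.powerset ×ˢ Finset.range (n + 1), g x = P * T := by
      rw [Finset.sum_product]
      rw [hP_sum, Finset.sum_mul]
      apply Finset.sum_congr rfl
      intro t ht
      rw [hT_def, Finset.mul_sum]
    calc (2 : ℝ) = ∑ d ∈ n.divisors, (1 : ℝ) / (d : ℝ) := hsum2.symm
      _ = ∑ x ∈ n.divisors.image φ, g x := step1
      _ ≤ ∑ x ∈ n.primeFactors.powerset ×ˢ Finset.range (n + 1), g x := step2
      _ = P * T := step3
  have hπ : (0 : ℝ) < π ^ 2 := by positivity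
  have hPgt : 16 / π ^ 2 < P := by
    have h1 : (2 : ℝ) < P * (π ^ 2 / 8) := by
      calc (2 : ℝ) ≤ P * T := hmain
        _ < P * (π ^ 2 / 8) := by exact mul_lt_mul_of_pos_left hTlt hPpos
    rw [div_lt_iff₀ hπ]
    nlinarith
  -- Part II: P ≤ LHS
  set q := n.primeFactors.orderEmbOfFin hm with hq_def
  have hqmem : ∀ i : Fin m, q i ∈ n.primeFactors := fun i => Finset.orderEmbOfFin_mem _ hm i
  have hqprime : ∀ i : Fin m, (q i).Prime := fun i => Nat.prime_of_mem_primeFactors (hqmem i)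
  have hqodd : ∀ i : Fin m, ¬ (2 ∣ q i) := by
    intro i h
    have := Nat.dvd_of_mem_primeFactors (hqmem i)
    exact h2n (h.trans this)
  have hq3 : ∀ i : Fin m, 3 ≤ q i := by
    intro i
    have h2 := (hqprime i).two_le
    have hne2 : q i ≠ 2 := fun h => hqodd i (by rw [h])
    omega
  have h0m : (0 : ℕ) < m := by omega
  have h1m : (1 : ℕ) < m := by omega
  have h2m : (2 : ℕ) < m := by omega
  have hmono : StrictMono q := (n.primeFactors.orderEmbOfFin hm).strictMono
  have hq1 : 5 ≤ q ⟨1, h1m⟩ := by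
    have hlt : q ⟨0, h0m⟩ < q ⟨1, h1m⟩ := hmono (by simp [Fin.lt_def])
    have h3 := hq3 ⟨0, h0m⟩
    have hodd1 := hqodd ⟨1, h1m⟩
    have : 4 ≤ q ⟨1, h1m⟩ := by omega
    rcases Nat.lt_or_ge (q ⟨1, h1m⟩) 5 with h | h
    · exfalso
      have : q ⟨1, h1m⟩ = 4 := by omega
      exact hodd1 (this ▸ ⟨2, rfl⟩)
    · exact h
  have hq2 : q ⟨2, h2m⟩ = Nat.nth Nat.Prime (r - 1) := by
    have hlen : 2 < (Finset.sort n.primeFactors (· ≤ ·)).length := by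
      rw [Finset.length_sort]; omega
    rw [getElem!_pos (Finset.sort n.primeFactors (· ≤ ·)) 2 hlen] at hthird
    rw [hq_def, Finset.orderEmbOfFin_apply]
    simpa using hthird
  -- step bound for indices ≥ 2
  have hstep : ∀ i : ℕ, ∀ h : 2 + i < m, Nat.nth Nat.Prime (r - 1 + i) ≤ q ⟨2 + i, h⟩ := by
    intro i
    induction i with
    | zero =>
      intro h
      have : (⟨2 + 0, h⟩ : Fin m) = ⟨2, h2m⟩ := by simp
      rw [this, hq2]
      simp
    | succ k ih =>
      intro h
      have hk : 2 + k < m := by omega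
      have hlt : q ⟨2 + k, hk⟩ < q ⟨2 + (k + 1), h⟩ := hmono (by simp [Fin.lt_def])
      have h1 := ih hk
      have h2 : Nat.nth Nat.Prime (r - 1 + k) < q ⟨2 + (k + 1), h⟩ := by omega
      have := nth_prime_succ_le (hqprime ⟨2 + (k + 1), h⟩) h2
      have heq : r - 1 + k + 1 = r - 1 + (k + 1) := by omega
      rw [heq] at this
      exact this
  -- define comparison factors
  set c : ℕ → ℝ := fun i =>
    if i = 0 then 1 + 1 / 3 else if i = 1 then 1 + 1 / 5
    else 1 + 1 / (Nat.nth Nat.Prime (r - 1 + (i - 2)) : ℝ) with hc_def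
  have hnthpos : ∀ k : ℕ, 0 < (Nat.nth Nat.Prime k : ℝ) := by
    intro k
    have : (Nat.nth Nat.Prime k).Prime := Nat.nth_mem_of_infinite Nat.infinite_setOf_prime k
    have := this.two_le
    exact_mod_cast by omega
  have hbound : ∀ i : Fin m, 1 + 1 / (q i : ℝ) ≤ c i := by
    rintro ⟨iv, hiv⟩
    have hq3' := hq3 ⟨iv, hiv⟩
    have hqpos : (0 : ℝ) < (q ⟨iv, hiv⟩ : ℝ) := by exact_mod_cast by omega
    match iv, hiv with
    | 0, hiv =>
      have hc0 : c 0 = 1 + 1 / 3 := by norm_num [hc_def]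
      rw [hc0]
      have : (3 : ℝ) ≤ (q ⟨0, hiv⟩ : ℝ) := by exact_mod_cast hq3 ⟨0, hiv⟩
      have h1 : 1 / (q ⟨0, hiv⟩ : ℝ) ≤ 1 / 3 := by
        apply one_div_le_one_div_of_le <;> linarith
      linarith
    | 1, hiv =>
      have hc1 : c 1 = 1 + 1 / 5 := by norm_num [hc_def]
      rw [hc1]
      have : (5 : ℝ) ≤ (q ⟨1, hiv⟩ : ℝ) := by exact_mod_cast hq1
      have h1 : 1 / (q ⟨1, hiv⟩ : ℝ) ≤ 1 / 5 := by
        apply one_div_le_one_div_of_le <;> linarith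
      linarith
    | (k + 2), hiv =>
      have hck : c (k + 2) = 1 + 1 / (Nat.nth Nat.Prime (r - 1 + k) : ℝ) := by
        have hne0 : k + 2 ≠ 0 := by omega
        have hne1 : k + 2 ≠ 1 := by omega
        simp only [hc_def, if_neg hne0, if_neg hne1]
        rw [show k + 2 - 2 = k from by omega]
      rw [hck]
      have hk2 : 2 + k < m := by omega
      have hfe : (⟨k + 2, hiv⟩ : Fin m) = ⟨2 + k, hk2⟩ := by simp; omega
      have hge := hstep k hk2
      rw [hfe]
      have hge' : (Nat.nth Nat.Prime (r - 1 + k) : ℝ) ≤ (q ⟨2 + k, hk2⟩ : ℝ) := by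
        exact_mod_cast hge
      have h1 : 1 / (q ⟨2 + k, hk2⟩ : ℝ) ≤ 1 / (Nat.nth Nat.Prime (r - 1 + k) : ℝ) := by
        apply one_div_le_one_div_of_le (hnthpos _) hge'
      linarith
  -- P as product over Fin m
  have himg : n.primeFactors = Finset.image (fun i => q i) Finset.univ := by
    ext p
    simp only [Finset.mem_image, Finset.mem_univ, true_and]
    constructor
    · intro hp
      have : p ∈ Set.range (⇑q) := by
        rw [hq_def, Finset.range_orderEmbOfFin]
        exact hp
      exact this
    · rintro ⟨i, rfl⟩
      exact hqmem i
  have hP_fin : P = ∏ i : Fin m, (1 + 1 / (q i : ℝ)) := by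
    rw [hP_def, himg, Finset.prod_image]
    intro x _ y _ hxy
    exact hmono.injective hxy
  have hP_le : P ≤ ∏ i : Fin m, c i := by
    rw [hP_fin]
    apply Finset.prod_le_prod
    · intro i _
      have hq3' := hq3 i
      have : (0 : ℝ) < (q i : ℝ) := by exact_mod_cast by omega
      positivity
    · intro i _
      exact hbound i
  -- compute ∏ c
  have hc_prod : ∏ i : Fin m, c i
      = (1 + 1 / 3 : ℝ) * (1 + 1 / 5) *
        ∏ i ∈ Finset.range (m - 2), (1 + 1 / (Nat.nth Nat.Prime (r - 1 + i) : ℝ)) := by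
    rw [Fin.prod_univ_eq_prod_range]
    have hm' : m = 2 + (m - 2) := by omega
    conv_lhs => rw [hm']
    rw [Finset.prod_range_add]
    have h2 : ∏ x ∈ Finset.range 2, c x = (1 + 1 / 3 : ℝ) * (1 + 1 / 5) := by
      rw [Finset.prod_range_succ, Finset.prod_range_one]
      norm_num [hc_def]
    rw [h2]
    congr 1
    apply Finset.prod_congr rfl
    intro i _
    have hne0 : 2 + i ≠ 0 := by omega
    have hne1 : 2 + i ≠ 1 := by omega
    simp only [hc_def, if_neg hne0, if_neg hne1]
    rw [show 2 + i - 2 = i from by omega]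
  -- rewrite the Icc product
  have hIcc : ∏ j ∈ Finset.Icc r (r + m - 3), (1 + 1 / (Nat.nth Nat.Prime (j - 1) : ℝ))
      = ∏ i ∈ Finset.range (m - 2), (1 + 1 / (Nat.nth Nat.Prime (r - 1 + i) : ℝ)) := by
    have h1 : Finset.Icc r (r + m - 3) = Finset.Ico r (r + m - 3 + 1) := by
      rw [← Finset.Ico_add_one_right_eq_Icc]
    rw [h1, Finset.prod_Ico_eq_prod_range]
    have h2 : r + m - 3 + 1 - r = m - 2 := by omega
    rw [h2]
    apply Finset.prod_congr rfl
    intro i _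
    rw [show r + i - 1 = r - 1 + i from by omega]
  rw [gt_iff_lt, hIcc, ← hc_prod]
  exact lt_of_lt_of_le hPgt hP_le
end

section
/- If n is an odd perfect number with exactly 9 distinct prime factors, then the third smallest prime factor of n is at most 509. -/
lemma geom_nat (p : ℕ) (hp : 1 ≤ p) (a : ℕ) :
    (∑ k ∈ Finset.range a, p ^ k) * (p - 1) + 1 = p ^ a := by
  obtain ⟨q, rfl⟩ : ∃ q, p = q + 1 := ⟨p - 1, by omega⟩
  simp only [Nat.add_sub_cancel]
  induction a with
  | zero => simp
  | succ a ih =>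
      rw [Finset.sum_range_succ, pow_succ]
      calc (∑ k ∈ Finset.range a, (q+1) ^ k + (q+1)^a) * q + 1
          = ((∑ k ∈ Finset.range a, (q+1) ^ k) * q + 1) + (q+1)^a * q := by ring
        _ = (q+1)^a + (q+1)^a * q := by rw [ih]
        _ = (q+1)^a * (q+1) := by ring

lemma list_bound (L : List ℕ) (h : ∀ q ∈ L, 510 ≤ q) :
    L.prod * 509 ^ L.length ≤ (L.map (· - 1)).prod * 510 ^ L.length := by
  induction L with
  | nil => simp
  | cons q L ih =>
      simp only [List.prod_cons, List.map_cons, List.length_cons, pow_succ]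
      have h1 : q * 509 ≤ (q - 1) * 510 := by have := h q (by simp); omega
      have h2 := ih (fun x hx => h x (by simp [hx]))
      calc q * L.prod * (509 ^ L.length * 509)
          = (q * 509) * (L.prod * 509 ^ L.length) := by ring
        _ ≤ ((q-1) * 510) * ((L.map (· - 1)).prod * 510 ^ L.length) :=
            Nat.mul_le_mul h1 h2
        _ = (q-1) * (L.map (· - 1)).prod * (510 ^ L.length * 510) := by ring

lemma prod_sort_map (S : Finset ℕ) (f : ℕ → ℕ) :
    ((S.sort (· ≤ ·)).map f).prod = ∏ p ∈ S, f p := by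
  rw [Finset.prod, ← Finset.sort_eq S (· ≤ ·), Multiset.map_coe, Multiset.prod_coe]

-- main inequality: 2 * ∏ (p-1) < ∏ p
lemma key_ineq (n : ℕ) (hn : Nat.Perfect n) (hne : n.primeFactors.Nonempty) :
    2 * ∏ p ∈ n.primeFactors, (p - 1) < ∏ p ∈ n.primeFactors, p := by
  have hn0 : 0 < n := hn.2
  have hs := (Nat.perfect_iff_sum_divisors_eq_two_mul hn0).mp hn
  have hsum := Nat.sum_divisors (n := n) hn0.ne'
  have hstrict : ∏ p ∈ n.primeFactors,
      ((∑ k ∈ Finset.range (n.factorization p + 1), p ^ k) * (p - 1))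
      < ∏ p ∈ n.primeFactors, p ^ (n.factorization p + 1) := by
    apply Finset.prod_lt_prod_of_nonempty
    · intro p hp
      have hp2 := (Nat.prime_of_mem_primeFactors hp).two_le
      have : 0 < ∑ k ∈ Finset.range (n.factorization p + 1), p ^ k :=
        Finset.sum_pos (fun k _ => Nat.pow_pos (by omega)) (by simp)
      have : 0 < p - 1 := by omega
      positivity
    · intro p hp
      have hp2 := (Nat.prime_of_mem_primeFactors hp).two_le
      have := geom_nat p (by omega) (n.factorization p + 1)
      omega
    · exact hne
  have hleft : ∏ p ∈ n.primeFactors,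
      ((∑ k ∈ Finset.range (n.factorization p + 1), p ^ k) * (p - 1))
      = (2 * n) * ∏ p ∈ n.primeFactors, (p - 1) := by
    rw [Finset.prod_mul_distrib, ← hsum, hs]
  have hfac : ∏ p ∈ n.primeFactors, p ^ n.factorization p = n :=
    Nat.factorization_prod_pow_eq_self hn0.ne'
  have hright : ∏ p ∈ n.primeFactors, p ^ (n.factorization p + 1)
      = n * ∏ p ∈ n.primeFactors, p := by
    calc ∏ p ∈ n.primeFactors, p ^ (n.factorization p + 1)
        = ∏ p ∈ n.primeFactors, p ^ n.factorization p * p :=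
          Finset.prod_congr rfl fun p _ => pow_succ p _
      _ = (∏ p ∈ n.primeFactors, p ^ n.factorization p) * ∏ p ∈ n.primeFactors, p :=
          Finset.prod_mul_distrib
      _ = n * ∏ p ∈ n.primeFactors, p := by rw [hfac]
  rw [hleft, hright] at hstrict
  have : 2 * ∏ p ∈ n.primeFactors, (p - 1) < ∏ p ∈ n.primeFactors, p := by
    have := hstrict
    rw [mul_comm 2 n, mul_assoc] at this
    exact Nat.lt_of_mul_lt_mul_left this
  exact this

/-- If `n` is an odd perfect number with exactly 9 distinct prime factors, then the
third smallest prime factor of `n` is at most 509. -/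
theorem opn_nine_factors_third_le (n : ℕ) (hn : Nat.Perfect n) (hodd : Odd n)
    (hω : n.primeFactors.card = 9) :
    (Finset.sort n.primeFactors (· ≤ ·))[2]! ≤ 509 := by
  by_contra hlt
  push_neg at hlt
  have hn0 : 0 < n := hn.2
  have hodd2 : ¬ (2 ∣ n) := by rcases hodd with ⟨k, rfl⟩; omega
  have hlen : (Finset.sort n.primeFactors (· ≤ ·)).length = 9 := by
    rw [Finset.length_sort, hω]
  have hsorted : List.Pairwise (· < ·) (Finset.sort n.primeFactors (· ≤ ·)) :=
    List.sortedLT_iff_pairwise.mp (Finset.sortedLT_sort n.primeFactors)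
  have hprime : ∀ p ∈ Finset.sort n.primeFactors (· ≤ ·), 3 ≤ p ∧ p.Prime := by
    intro p hp
    have hp' : p ∈ n.primeFactors := (Finset.mem_sort _).mp hp
    have h1 := Nat.prime_of_mem_primeFactors hp'
    have h2 : p ∣ n := Nat.dvd_of_mem_primeFactors hp'
    have := h1.two_le
    refine ⟨?_, h1⟩
    rcases Nat.eq_or_lt_of_le this with h | h
    · exact absurd (h ▸ h2) hodd2
    · omega
  have hkey := key_ineq n hn (Finset.card_pos.mp (by omega))
  have hprodA : (Finset.sort n.primeFactors (· ≤ ·)).prod = ∏ p ∈ n.primeFactors, p := by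
    simpa using prod_sort_map n.primeFactors id
  have hprodB : ((Finset.sort n.primeFactors (· ≤ ·)).map (· - 1)).prod
      = ∏ p ∈ n.primeFactors, (p - 1) := prod_sort_map n.primeFactors _
  obtain ⟨p0, p1, p2, rest, heq, hrl⟩ : ∃ p0 p1 p2 rest,
      Finset.sort n.primeFactors (· ≤ ·) = p0 :: p1 :: p2 :: rest ∧ rest.length = 6 := by
    match hm : Finset.sort n.primeFactors (· ≤ ·), hlen with
    | p0 :: p1 :: p2 :: rest, h => exact ⟨p0, p1, p2, rest, rfl, by simpa using h⟩
  rw [heq] at hlt hsorted hprime hprodA hprodB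
  simp only [List.getElem!_cons_succ, List.getElem!_cons_zero] at hlt
  simp only [List.pairwise_cons, List.mem_cons] at hsorted
  obtain ⟨hs0, hs1, hs2, -⟩ := hsorted
  have hp0 : 3 ≤ p0 := (hprime p0 (by simp)).1
  have hp1 : 5 ≤ p1 := by
    have h4 := (hprime p1 (by simp)).2
    have : p0 < p1 := hs0 p1 (by simp)
    have : p1 ≠ 4 := by rintro rfl; exact absurd h4 (by decide)
    omega
  have hp2 : 510 ≤ p2 := by omega
  have hrest : ∀ q ∈ rest, 510 ≤ q := by
    intro q hq
    have := hs2 q hq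
    omega
  have hlb := list_bound rest hrest
  rw [hrl] at hlb
  set R := rest.prod with hR
  set R' := (rest.map (· - 1)).prod with hR'
  have h0 : p0 * 2 ≤ (p0 - 1) * 3 := by omega
  have h1 : p1 * 4 ≤ (p1 - 1) * 5 := by omega
  have h2 : p2 * 509 ≤ (p2 - 1) * 510 := by clear hlb; omega
  set a := p0 - 1 with ha
  set b := p1 - 1 with hb
  set c := p2 - 1 with hc
  have hmain : (p0 * (p1 * (p2 * R))) * (2 * (4 * (509 * 509 ^ 6)))
      ≤ (a * (b * (c * R'))) * (2 * (2 * (4 * (509 * 509 ^ 6)))) := by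
    calc (p0 * (p1 * (p2 * R))) * (2 * (4 * (509 * 509 ^ 6)))
        = (p0 * 2) * ((p1 * 4) * ((p2 * 509) * (R * 509 ^ 6))) := by ring
      _ ≤ (a * 3) * ((b * 5) * ((c * 510) * (R' * 510 ^ 6))) :=
          Nat.mul_le_mul h0 (Nat.mul_le_mul h1 (Nat.mul_le_mul h2 hlb))
      _ = (a * (b * (c * R'))) * (3 * (5 * (510 * 510 ^ 6))) := by ring
      _ ≤ (a * (b * (c * R'))) * (2 * (2 * (4 * (509 * 509 ^ 6)))) :=
          Nat.mul_le_mul_left _ (by norm_num)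
  have hAB : (p0 * (p1 * (p2 * R))) ≤ 2 * (a * (b * (c * R'))) := by
    have := hmain
    rw [show (a * (b * (c * R'))) * (2 * (2 * (4 * (509 * 509 ^ 6))))
        = (2 * (a * (b * (c * R')))) * (2 * (4 * (509 * 509 ^ 6))) by ring] at this
    exact Nat.le_of_mul_le_mul_right this (by norm_num)
  simp only [List.prod_cons, List.map_cons] at hprodA hprodB
  rw [hprodA] at hAB
  rw [← hR', ← ha, ← hb, ← hc] at hprodB
  rw [hprodB] at hAB
  omega
end
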